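/- Let t ≥ 2 be a power of 2 and t ≥ n₁ ≥ ... ≥ n_{log t} ≥ 0 integers. With Y_k ~ Binomial(n_k, 2^k/t) independent and Y equal to the first nonzero Y_k (or 0 if all are zero), E[Y] ≤ 5. -/

import Mathlib

open MeasureTheory Finset

lemma binom_mean (N : ℕ) (p : ℝ) :
    ∑ m ∈ Finset.range (N + 1),
      (m : ℝ) * ((N.choose m : ℝ) * p ^ m * (1 - p) ^ (N - m)) = N * p := by
  cases N with
  | zero => simp
  | succ N =>
    rw [Finset.sum_range_succ']
    have h : ∀ i ∈ Finset.range (N + 1),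
        ((i + 1 : ℕ) : ℝ) * (((N + 1).choose (i + 1) : ℝ) * p ^ (i + 1) *
            (1 - p) ^ (N + 1 - (i + 1)))
          = ((N : ℝ) + 1) * p * ((N.choose i : ℝ) * p ^ i * (1 - p) ^ (N - i)) := by
      intro i _
      have hc : ((N + 1).choose (i + 1) : ℝ) * (i + 1) = (N + 1) * (N.choose i) := by
        exact_mod_cast (Nat.add_one_mul_choose_eq N i).symm
      have hs : N + 1 - (i + 1) = N - i := by omega
      rw [hs]
      push_cast
      push_cast at hc
      linear_combination (p ^ (i + 1) * (1 - p) ^ (N - i)) * hc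
    rw [Finset.sum_congr rfl h, ← Finset.mul_sum]
    have hb : ∑ i ∈ Finset.range (N + 1), (N.choose i : ℝ) * p ^ i * (1 - p) ^ (N - i) = 1 := by
      have h2 : ∑ i ∈ Finset.range (N + 1), (N.choose i : ℝ) * p ^ i * (1 - p) ^ (N - i)
          = (p + (1 - p)) ^ N := by
        rw [add_pow]
        exact Finset.sum_congr rfl fun i _ => by ring
      rw [h2]; norm_num
    rw [hb]
    push_cast
    ring

lemma tail_bound :
    ∀ (L : ℕ) (a : ℕ → ℝ), (∀ i, 0 ≤ a i) → (∀ i, a (i + 1) ≤ 2 * a i) →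
      ∑ k ∈ Finset.range L, a k * ∏ j ∈ Finset.range k, Real.exp (-a j) ≤ a 0 + 3 := by
  intro L
  induction L with
  | zero => intro a ha _; simp; linarith [ha 0]
  | succ L ih =>
    intro a ha hstep
    rw [Finset.sum_range_succ']
    have h0 : a 0 * ∏ j ∈ Finset.range 0, Real.exp (-a j) = a 0 := by simp
    have key : ∑ i ∈ Finset.range L, a (i + 1) * ∏ j ∈ Finset.range (i + 1), Real.exp (-a j)
        = Real.exp (-a 0) *
          ∑ i ∈ Finset.range L, a (i + 1) * ∏ j ∈ Finset.range i, Real.exp (-a (j + 1)) := by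
      rw [Finset.mul_sum]
      refine Finset.sum_congr rfl fun i _ => ?_
      rw [Finset.prod_range_succ']
      ring
    rw [h0, key]
    have hIH := ih (fun i => a (i + 1)) (fun i => ha _) (fun i => hstep _)
    have h1 : a 1 ≤ 2 * a 0 := hstep 0
    have hE := Real.add_one_le_exp (a 0)
    have hEpos := Real.exp_pos (-a 0)
    have hS : ∑ i ∈ Finset.range L, a (i + 1) * ∏ j ∈ Finset.range i, Real.exp (-a (j + 1))
        ≤ 2 * a 0 + 3 := le_trans hIH (by linarith)
    have h4 : Real.exp (-a 0) * (2 * a 0 + 3) ≤ Real.exp (-a 0) * (3 * Real.exp (a 0)) :=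
      mul_le_mul_of_nonneg_left (by nlinarith [ha 0]) (le_of_lt hEpos)
    have h5 : Real.exp (-a 0) * (3 * Real.exp (a 0)) = 3 := by
      rw [Real.exp_neg]
      field_simp
    have h6 : Real.exp (-a 0) *
        (∑ i ∈ Finset.range L, a (i + 1) * ∏ j ∈ Finset.range i, Real.exp (-a (j + 1)))
        ≤ Real.exp (-a 0) * (2 * a 0 + 3) := mul_le_mul_of_nonneg_left hS (le_of_lt hEpos)
    linarith

theorem stmt7 {Ω : Type*} [MeasurableSpace Ω] (μ : Measure Ω) [IsProbabilityMeasure μ]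
    (t L : ℕ) (ht : t = 2 ^ L) (hL : 1 ≤ L)
    (n : Fin L → ℕ) (hnt : ∀ k, n k ≤ t)
    (hmono : ∀ j k : Fin L, j ≤ k → n k ≤ n j)
    (Y : Fin L → Ω → ℕ) (hYmeas : ∀ k, Measurable (Y k))
    (hindep : ProbabilityTheory.iIndepFun Y μ)
    (hdist : ∀ (k : Fin L) (m : ℕ),
      μ {ω | Y k ω = m} =
        ENNReal.ofReal ((n k).choose m * ((2 : ℝ) ^ ((k : ℕ) + 1) / t) ^ m *
          (1 - (2 : ℝ) ^ ((k : ℕ) + 1) / t) ^ (n k - m)))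
    (Z : Ω → ℕ) (hZmeas : Measurable Z)
    (hZ0 : ∀ ω, (∀ k, Y k ω = 0) → Z ω = 0)
    (hZ1 : ∀ ω (k : Fin L), Y k ω ≠ 0 → (∀ j, j < k → Y j ω = 0) → Z ω = Y k ω) :
    (∫ ω, (Z ω : ℝ) ∂μ) ≤ 5 := by
  classical
  have ht0 : (0 : ℝ) < t := by
    have : 0 < t := by rw [ht]; positivity
    exact_mod_cast this
  set p : Fin L → ℝ := fun k => (2 : ℝ) ^ ((k : ℕ) + 1) / t with hp
  have hp0 : ∀ k, 0 ≤ p k := fun k => by rw [hp]; positivity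
  have hp1 : ∀ k, p k ≤ 1 := by
    intro k
    rw [hp]
    simp only
    rw [div_le_one ht0]
    have h2 : (2 : ℝ) ^ ((k : ℕ) + 1) ≤ (2 : ℝ) ^ L :=
      pow_le_pow_right₀ one_le_two k.isLt
    have hteq : (t : ℝ) = (2 : ℝ) ^ L := by rw [ht]; push_cast; ring
    rw [hteq]; exact h2
  have hq0 : ∀ k, 0 ≤ 1 - p k := fun k => by linarith [hp1 k]
  -- the sets B k
  set B : Fin L → Set Ω := fun k => ⋂ j ∈ Finset.Iio k, {ω | Y j ω = 0} with hB
  have hBmeas : ∀ k, MeasurableSet (B k) := by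
    intro k
    refine MeasurableSet.biInter (Finset.Iio k).countable_toSet fun j _ => ?_
    exact hYmeas j (measurableSet_singleton 0)
  set X : Fin L → Ω → ℝ := fun k ω => (Y k ω : ℝ) with hXdef
  set W : Fin L → Ω → ℝ := fun k => (B k).indicator fun _ => (1 : ℝ) with hWdef
  have hXmeas : ∀ k, Measurable (X k) :=
    fun k => (measurable_of_countable (fun m : ℕ => (m : ℝ))).comp (hYmeas k)
  have hWmeas : ∀ k, Measurable (W k) := fun k => measurable_const.indicator (hBmeas k)
  have hX0 : ∀ k, 0 ≤ X k := fun k ω => by simp [hXdef]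
  have hW0 : ∀ k, 0 ≤ W k := fun k ω => Set.indicator_nonneg (fun _ _ => zero_le_one) ω
  have hW1 : ∀ k ω, W k ω ≤ 1 := by
    intro k ω
    by_cases h : ω ∈ B k <;> simp [hWdef, Set.indicator_apply, h]
  -- a.e. bound
  have hae : ∀ k, ∀ᵐ ω ∂μ, Y k ω ≤ n k := by
    intro k
    rw [ae_iff]
    have hsub : {ω | ¬Y k ω ≤ n k} ⊆ ⋃ m : ℕ, {ω | Y k ω = n k + 1 + m} := by
      intro ω hω
      simp only [Set.mem_setOf_eq, not_le] at hω
      exact Set.mem_iUnion.2 ⟨Y k ω - (n k + 1), by simp only [Set.mem_setOf_eq]; omega⟩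
    refine measure_mono_null hsub (measure_iUnion_null fun m => ?_)
    rw [hdist k (n k + 1 + m), Nat.choose_eq_zero_of_lt (by omega)]
    simp
  -- integrability
  have hXint : ∀ k, Integrable (X k) μ := by
    intro k
    refine (integrable_const ((n k : ℝ))).mono' (hXmeas k).aestronglyMeasurable ?_
    filter_upwards [hae k] with ω hω
    rw [Real.norm_eq_abs, abs_of_nonneg (hX0 k ω)]
    simp only [hXdef]
    exact_mod_cast hω
  have hXWint : ∀ k, Integrable (fun ω => X k ω * W k ω) μ := by
    intro k
    refine (integrable_const ((n k : ℝ))).mono'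
      (((hXmeas k).mul (hWmeas k)).aestronglyMeasurable) ?_
    filter_upwards [hae k] with ω hω
    rw [Real.norm_eq_abs, abs_of_nonneg (mul_nonneg (hX0 k ω) (hW0 k ω))]
    calc X k ω * W k ω ≤ X k ω * 1 := mul_le_mul_of_nonneg_left (hW1 k ω) (hX0 k ω)
      _ = X k ω := mul_one _
      _ ≤ (n k : ℝ) := by simp only [hXdef]; exact_mod_cast hω
  -- pointwise decomposition
  have hpt : ∀ ω, (Z ω : ℝ) = ∑ k : Fin L, X k ω * W k ω := by
    intro ω
    by_cases hall : ∀ k, Y k ω = 0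
    · rw [hZ0 ω hall, Finset.sum_eq_zero]
      · simp
      intro k _
      have hx : X k ω = 0 := by simp [hXdef, hall k]
      rw [hx, zero_mul]
    · push_neg at hall
      set s : Finset (Fin L) := Finset.univ.filter (fun k => Y k ω ≠ 0) with hs
      obtain ⟨kw, hkw⟩ := hall
      have hne : s.Nonempty := ⟨kw, by simp [hs, hkw]⟩
      set k₀ := s.min' hne with hk₀
      have hk₀mem : Y k₀ ω ≠ 0 := by
        have := s.min'_mem hne
        simp only [hs, Finset.mem_filter] at this
        exact this.2
      have hmin : ∀ j, j < k₀ → Y j ω = 0 := by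
        intro j hj
        by_contra hjne
        have : k₀ ≤ j := s.min'_le j (by simp [hs, hjne])
        exact absurd hj (not_lt.2 this)
      rw [hZ1 ω k₀ hk₀mem hmin]
      rw [Finset.sum_eq_single k₀]
      · have hωB : ω ∈ B k₀ := by
          simp only [hB, Set.mem_iInter, Set.mem_setOf_eq]
          intro j hj
          exact hmin j (Finset.mem_Iio.1 hj)
        simp [hXdef, hWdef, Set.indicator_of_mem hωB]
      · intro k _ hk
        rcases lt_or_gt_of_ne hk with h | h
        · have hx : Y k ω = 0 := hmin k h
          simp [hXdef, hx]
        · have hωnB : ω ∉ B k := by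
            simp only [hB, Set.mem_iInter, Set.mem_setOf_eq]
            push_neg
            exact ⟨k₀, Finset.mem_Iio.2 h, hk₀mem⟩
          simp [hWdef, Set.indicator_of_notMem hωnB]
      · intro h; exact absurd (Finset.mem_univ k₀) h
  -- independence
  have hindepXW : ∀ k, ProbabilityTheory.IndepFun (X k) (W k) μ := by
    intro k
    have hdisj : Disjoint ({k} : Finset (Fin L)) (Finset.Iio k) := by
      simp [Finset.disjoint_left]
    have h := hindep.indepFun_finset {k} (Finset.Iio k) hdisj hYmeas
    set φ : (∀ _i : ({k} : Finset (Fin L)), ℕ) → ℝ :=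
      fun v => (v ⟨k, Finset.mem_singleton_self k⟩ : ℝ) with hφdef
    set ψ : (∀ _i : (Finset.Iio k : Finset (Fin L)), ℕ) → ℝ :=
      Set.indicator {v | ∀ i, v i = 0} (fun _ => (1 : ℝ)) with hψdef
    have hφ : Measurable φ :=
      (measurable_of_countable (fun m : ℕ => (m : ℝ))).comp (measurable_pi_apply _)
    have hψ : Measurable ψ := by
      refine measurable_const.indicator ?_
      have hset : {v : ∀ _i : (Finset.Iio k : Finset (Fin L)), ℕ | ∀ i, v i = 0}
          = ⋂ i, (fun v : ∀ _i : (Finset.Iio k : Finset (Fin L)), ℕ => v i) ⁻¹' {0} := by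
        ext v; simp [Set.mem_iInter]
      rw [hset]
      exact MeasurableSet.iInter fun i => measurable_pi_apply i (measurableSet_singleton 0)
    have h2 := h.comp hφ hψ
    have e1 : φ ∘ (fun a (i : ({k} : Finset (Fin L))) => Y i a) = X k := rfl
    have e2 : ψ ∘ (fun a (i : (Finset.Iio k : Finset (Fin L))) => Y i a) = W k := by
      funext ω
      simp only [Function.comp_apply, hψdef, hWdef]
      by_cases hω : ω ∈ B k
      · rw [Set.indicator_of_mem hω, Set.indicator_of_mem]
        simp only [Set.mem_setOf_eq]
        intro i
        have hm := hω
        simp only [hB, Set.mem_iInter, Set.mem_setOf_eq] at hm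
        exact hm i i.2
      · rw [Set.indicator_of_notMem hω, Set.indicator_of_notMem]
        simp only [Set.mem_setOf_eq]
        intro hct
        apply hω
        simp only [hB, Set.mem_iInter, Set.mem_setOf_eq]
        intro j hj
        exact hct ⟨j, hj⟩
    rw [e1, e2] at h2
    exact h2
  -- expectation of X k
  have hEX : ∀ k, ∫ ω, X k ω ∂μ = (n k : ℝ) * p k := by
    intro k
    have hcongr : X k =ᵐ[μ] fun ω => ∑ m ∈ Finset.range (n k + 1),
        (m : ℝ) * ({ω' | Y k ω' = m}).indicator (fun _ => (1 : ℝ)) ω := by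
      filter_upwards [hae k] with ω hω
      rw [Finset.sum_eq_single_of_mem (Y k ω) (Finset.mem_range.2 (by omega))]
      · rw [Set.indicator_of_mem (by exact rfl)]
        simp [hXdef]
      · intro m _ hm
        rw [Set.indicator_of_notMem (by simp only [Set.mem_setOf_eq]; omega), mul_zero]
    rw [integral_congr_ae hcongr, integral_finset_sum]
    · have hterm : ∀ m ∈ Finset.range (n k + 1),
          ∫ ω, (m : ℝ) * ({ω' | Y k ω' = m}).indicator (fun _ => (1 : ℝ)) ω ∂μ
            = (m : ℝ) * (((n k).choose m : ℝ) * p k ^ m * (1 - p k) ^ (n k - m)) := by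
        intro m _
        rw [integral_const_mul,
          show {ω' | Y k ω' = m} = Y k ⁻¹' {m} from rfl,
          integral_indicator_const (1 : ℝ) (hYmeas k (measurableSet_singleton m)),
          show (Y k ⁻¹' {m}) = {ω | Y k ω = m} from rfl, measureReal_def, hdist k m,
          ENNReal.toReal_ofReal
            (mul_nonneg (mul_nonneg (by positivity) (by positivity)) (pow_nonneg (hq0 k) _))]
        simp [smul_eq_mul, hp]
      rw [Finset.sum_congr rfl hterm]
      exact binom_mean (n k) (p k)
    · intro m _
      exact (((integrable_const (1 : ℝ)).indicator
        (hYmeas k (measurableSet_singleton m)))).const_mul _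
  -- expectation of W k
  have hEW : ∀ k, ∫ ω, W k ω ∂μ = ∏ j ∈ Finset.Iio k, (1 - p j) ^ (n j) := by
    intro k
    rw [show (fun ω => W k ω) = (B k).indicator (fun _ => (1 : ℝ)) from rfl,
      integral_indicator_const (1 : ℝ) (hBmeas k), smul_eq_mul, mul_one]
    have hmeasB : μ (B k) = ∏ j ∈ Finset.Iio k, μ {ω | Y j ω = 0} :=
      hindep.meas_biInter (fun j _ => ⟨{0}, measurableSet_singleton 0, rfl⟩)
    rw [measureReal_def, hmeasB, ENNReal.toReal_prod]
    refine Finset.prod_congr rfl fun j _ => ?_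
    have hd := hdist j 0
    simp only [Nat.choose_zero_right, pow_zero, Nat.sub_zero, Nat.cast_one, one_mul,
      mul_one] at hd
    rw [hd, ENNReal.toReal_ofReal (pow_nonneg (hq0 j) _)]
  -- the extension A
  set A : ℕ → ℝ := fun i => if h : i < L then (n ⟨i, h⟩ : ℝ) * p ⟨i, h⟩ else 0 with hA
  have hA0 : ∀ i, 0 ≤ A i := by
    intro i
    simp only [hA]
    split
    · exact mul_nonneg (by positivity) (hp0 _)
    · exact le_refl 0
  have hAstep : ∀ i, A (i + 1) ≤ 2 * A i := by
    intro i
    by_cases h1 : i + 1 < L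
    · have h0 : i < L := by omega
      simp only [hA, dif_pos h1, dif_pos h0, hp]
      have hn : (n ⟨i + 1, h1⟩ : ℝ) ≤ (n ⟨i, h0⟩ : ℝ) := by
        exact_mod_cast hmono ⟨i, h0⟩ ⟨i + 1, h1⟩ (by simp [Fin.le_def])
      have hmul := mul_le_mul_of_nonneg_right hn
        (by positivity : (0 : ℝ) ≤ (2 : ℝ) ^ (i + 1 + 1) / t)
      have e : 2 * ((n ⟨i, h0⟩ : ℝ) * ((2 : ℝ) ^ (i + 1) / t))
          = (n ⟨i, h0⟩ : ℝ) * ((2 : ℝ) ^ (i + 1 + 1) / t) := by ring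
      calc (n ⟨i + 1, h1⟩ : ℝ) * ((2 : ℝ) ^ (i + 1 + 1) / t)
          ≤ (n ⟨i, h0⟩ : ℝ) * ((2 : ℝ) ^ (i + 1 + 1) / t) := hmul
        _ = 2 * ((n ⟨i, h0⟩ : ℝ) * ((2 : ℝ) ^ (i + 1) / t)) := e.symm
    · have : A (i + 1) = 0 := by simp only [hA, dif_neg h1]
      rw [this]
      linarith [hA0 i]
  have hA0le : A 0 ≤ 2 := by
    have h0 : 0 < L := by omega
    simp only [hA, dif_pos h0, hp]
    have hn : (n ⟨0, h0⟩ : ℝ) ≤ (t : ℝ) := by exact_mod_cast hnt ⟨0, h0⟩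
    have h2 : (n ⟨0, h0⟩ : ℝ) / t ≤ 1 := (div_le_one ht0).2 hn
    calc (n ⟨0, h0⟩ : ℝ) * ((2 : ℝ) ^ (0 + 1) / t) = 2 * ((n ⟨0, h0⟩ : ℝ) / t) := by ring
      _ ≤ 2 * 1 := by linarith
      _ = 2 := by ring
  -- conversion of products Iio → range
  have hAk : ∀ k : Fin L, A (k : ℕ) = (n k : ℝ) * p k := by
    intro k
    simp only [hA, dif_pos k.isLt, Fin.eta]
  have hprodconv : ∀ k : Fin L,
      ∏ j ∈ Finset.Iio k, Real.exp (-((n j : ℝ) * p j))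
        = ∏ j ∈ Finset.range (k : ℕ), Real.exp (-A j) := by
    intro k
    have hterm : ∀ j ∈ Finset.Iio k,
        Real.exp (-((n j : ℝ) * p j)) = (fun i : ℕ => Real.exp (-A i)) ((j : Fin L) : ℕ) := by
      intro j _
      simp only [hAk j]
    calc ∏ j ∈ Finset.Iio k, Real.exp (-((n j : ℝ) * p j))
        = ∏ j ∈ Finset.Iio k, (fun i : ℕ => Real.exp (-A i)) ((j : Fin L) : ℕ) :=
          Finset.prod_congr rfl hterm
      _ = ∏ j ∈ (Finset.Iio k).map Fin.valEmbedding, Real.exp (-A j) :=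
          by rw [Finset.prod_map]; rfl
      _ = ∏ j ∈ Finset.range (k : ℕ), Real.exp (-A j) := by
          rw [Fin.map_valEmbedding_Iio, Nat.Iio_eq_range]
  -- final chain
  calc ∫ ω, (Z ω : ℝ) ∂μ
      = ∫ ω, (∑ k : Fin L, X k ω * W k ω) ∂μ :=
        integral_congr_ae (Filter.Eventually.of_forall hpt)
    _ = ∑ k : Fin L, ∫ ω, X k ω * W k ω ∂μ :=
        integral_finset_sum Finset.univ (fun k _ => hXWint k)
    _ = ∑ k : Fin L, ((n k : ℝ) * p k) * ∏ j ∈ Finset.Iio k, (1 - p j) ^ (n j) := by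
        refine Finset.sum_congr rfl fun k _ => ?_
        have h := (hindepXW k).integral_mul_eq_mul_integral
          (hXmeas k).aestronglyMeasurable (hWmeas k).aestronglyMeasurable
        rw [show (fun ω => X k ω * W k ω) = X k * W k from rfl] at *
        rw [h, hEX k, hEW k]
    _ ≤ ∑ k : Fin L, A (k : ℕ) * ∏ j ∈ Finset.range (k : ℕ), Real.exp (-A j) := by
        refine Finset.sum_le_sum fun k _ => ?_
        rw [hAk k, ← hprodconv k]
        refine mul_le_mul_of_nonneg_left ?_ (mul_nonneg (by positivity) (hp0 k))
        refine Finset.prod_le_prod (fun j _ => pow_nonneg (hq0 j) _) (fun j _ => ?_)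
        have h1 : 1 - p j ≤ Real.exp (-p j) := by
          have := Real.add_one_le_exp (-p j); linarith
        calc (1 - p j) ^ (n j) ≤ (Real.exp (-p j)) ^ (n j) :=
              pow_le_pow_left₀ (hq0 j) h1 _
          _ = Real.exp (-((n j : ℝ) * p j)) := by
              rw [← Real.exp_nat_mul]; ring_nf
    _ = ∑ i ∈ Finset.range L, A i * ∏ j ∈ Finset.range i, Real.exp (-A j) :=
        Fin.sum_univ_eq_sum_range (fun i => A i * ∏ j ∈ Finset.range i, Real.exp (-A j)) L
    _ ≤ A 0 + 3 := tail_bound L A hA0 hAstep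
    _ ≤ 5 := by linarith [hA0le]
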